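/- arXiv:1411.2423 — 6 statements merged into one kernel-verified Lean document; each statement's English description precedes it below -/
import Mathlib

section
/- Fix an integer q ≥ 2 and a real number b > 0. The set of torpedo functions on [0,b] (of arbitrary radius δ > 0) is convex: if η₁ and η₂ are torpedo functions on [0,b] (of radii δ₁ = η₁(b) and δ₂ = η₂(b) respectively) and t ∈ [0,1], then the function t·η₁ + (1−t)·η₂ is again a torpedo function on [0,b], of radius t·δ₁ + (1−t)·δ₂. -/
/-- A `δ`-torpedo function on `[0,b]` (with `δ = η b`), for the parameter `q ≥ 2`:
a smooth function `η : ℝ → ℝ` with `η 0 = 0`, `η' 0 = 1`, all even-order derivatives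
of order `≥ 2` vanishing at `0`, `η > 0` on `(0,b]`, all derivatives of order `≥ 1`
vanishing at `b`, `η'' ≤ 0` on `[0,b]`, `η'' < 0` near (but not at) `0`, and the
scalar curvature `R_η(r) = -2q η''(r)/η(r) + q(q-1)(1-η'(r)²)/η(r)²` of the warped
product metric `dr² + η(r)² ds_q²` positive on `(0,b]`. -/
def IsTorpedoFunction (q : ℕ) (b : ℝ) (η : ℝ → ℝ) : Prop :=
  ContDiff ℝ (⊤ : ℕ∞) η ∧
  η 0 = 0 ∧
  deriv η 0 = 1 ∧
  (∀ k : ℕ, 1 ≤ k → iteratedDeriv (2 * k) η 0 = 0) ∧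
  (∀ r ∈ Set.Ioc (0 : ℝ) b, 0 < η r) ∧
  (∀ k : ℕ, 1 ≤ k → iteratedDeriv k η b = 0) ∧
  (∀ r ∈ Set.Icc (0 : ℝ) b, deriv (deriv η) r ≤ 0) ∧
  (∃ ε ∈ Set.Ioo (0 : ℝ) b, ∀ r ∈ Set.Ioo (0 : ℝ) ε, deriv (deriv η) r < 0) ∧
  (∀ r ∈ Set.Ioc (0 : ℝ) b,
    0 < -2 * (q : ℝ) * deriv (deriv η) r / η r
        + (q : ℝ) * ((q : ℝ) - 1) * (1 - (deriv η r) ^ 2) / (η r) ^ 2)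

lemma iteratedDeriv_lin_comb (t s : ℝ) {f g : ℝ → ℝ} (hf : ContDiff ℝ (⊤ : ℕ∞) f)
    (hg : ContDiff ℝ (⊤ : ℕ∞) g) (n : ℕ) :
    iteratedDeriv n (fun r => t * f r + s * g r)
      = fun r => t * iteratedDeriv n f r + s * iteratedDeriv n g r := by
  induction n with
  | zero => simp
  | succ n ih =>
    rw [iteratedDeriv_succ, ih, iteratedDeriv_succ, iteratedDeriv_succ]
    funext r
    have hfd : DifferentiableAt ℝ (iteratedDeriv n f) r := by
      rw [iteratedDeriv_eq_iterate]
      exact ((hf.iterate_deriv n).differentiable (by simp)).differentiableAt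
    have hgd : DifferentiableAt ℝ (iteratedDeriv n g) r := by
      rw [iteratedDeriv_eq_iterate]
      exact ((hg.iterate_deriv n).differentiable (by simp)).differentiableAt
    rw [deriv_fun_add (hfd.const_mul t) (hgd.const_mul s), deriv_const_mul t hfd,
      deriv_const_mul s hgd]

lemma torpedo_deriv_bounds (b : ℝ) (hb : 0 < b) (η : ℝ → ℝ) (hs : ContDiff ℝ (⊤ : ℕ∞) η)
    (h0 : deriv η 0 = 1) (hbder : deriv η b = 0)
    (hconc : ∀ r ∈ Set.Icc (0 : ℝ) b, deriv (deriv η) r ≤ 0) :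
    ∀ r ∈ Set.Icc (0 : ℝ) b, 0 ≤ deriv η r ∧ deriv η r ≤ 1 := by
  have hd : Differentiable ℝ (deriv η) := by
    have := (hs.iterate_deriv 1).differentiable (by simp)
    simpa using this
  have hmono : AntitoneOn (deriv η) (Set.Icc 0 b) :=
    antitoneOn_of_deriv_nonpos (convex_Icc 0 b) hd.continuous.continuousOn
      hd.differentiableOn
      (fun x hx => hconc x (by rw [interior_Icc] at hx; exact ⟨hx.1.le, hx.2.le⟩))
  intro r hr
  refine ⟨?_, ?_⟩
  · rw [← hbder]; exact hmono hr (Set.right_mem_Icc.mpr hb.le) hr.2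
  · rw [← h0]; exact hmono (Set.left_mem_Icc.mpr hb.le) hr hr.1

lemma torpedo_key_ineq (q t w₁ w₂ u₁ u₂ v₁ v₂ : ℝ) (hq : 2 ≤ q)
    (ht0 : 0 < t) (ht1 : t < 1)
    (hw₁ : w₁ ≤ 0) (hw₂ : w₂ ≤ 0)
    (hu₁0 : 0 ≤ u₁) (hu₁1 : u₁ ≤ 1) (hu₂0 : 0 ≤ u₂) (hu₂1 : u₂ ≤ 1)
    (hv₁ : 0 < v₁) (hv₂ : 0 < v₂)
    (h₁ : 0 < -2 * q * w₁ * v₁ + q * (q - 1) * (1 - u₁ ^ 2))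
    (h₂ : 0 < -2 * q * w₂ * v₂ + q * (q - 1) * (1 - u₂ ^ 2)) :
    0 < -2 * q * (t * w₁ + (1 - t) * w₂) * (t * v₁ + (1 - t) * v₂)
        + q * (q - 1) * (1 - (t * u₁ + (1 - t) * u₂) ^ 2) := by
  have ht1' : 0 < 1 - t := by linarith
  have hq0 : 0 < q := by linarith
  have hq1 : 0 < q - 1 := by linarith
  have hA : 0 ≤ 2 * q * (t * (1 - t)) * ((-w₁) * v₂ + (-w₂) * v₁) := by
    apply mul_nonneg (by positivity)
    exact add_nonneg (mul_nonneg (by linarith) hv₂.le) (mul_nonneg (by linarith) hv₁.le)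
  have hB : 0 ≤ q * (q - 1) * (t * (1 - t)) * ((1 - u₁ ^ 2) + (1 - u₂ ^ 2) + (u₁ - u₂) ^ 2) := by
    apply mul_nonneg (by positivity)
    have h1 : 0 ≤ 1 - u₁ ^ 2 := by nlinarith
    have h2 : 0 ≤ 1 - u₂ ^ 2 := by nlinarith
    positivity
  have hC : 0 < t ^ 2 * (-2 * q * w₁ * v₁ + q * (q - 1) * (1 - u₁ ^ 2)) := by positivity
  have hD : 0 < (1 - t) ^ 2 * (-2 * q * w₂ * v₂ + q * (q - 1) * (1 - u₂ ^ 2)) := by positivity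
  nlinarith [hA, hB, hC, hD]


/-- The set of torpedo functions on `[0,b]` (of arbitrary positive radius) is convex:
a convex combination `t·η₁ + (1-t)·η₂` of torpedo functions of radii `δ₁ = η₁ b`
and `δ₂ = η₂ b` is again a torpedo function, of radius `t·δ₁ + (1-t)·δ₂`. -/
theorem torpedo_functions_convex (q : ℕ) (hq : 2 ≤ q) (b : ℝ) (hb : 0 < b)
    (η₁ η₂ : ℝ → ℝ) (δ₁ δ₂ : ℝ) (hδ₁ : 0 < δ₁) (hδ₂ : 0 < δ₂)
    (hη₁ : IsTorpedoFunction q b η₁) (hη₂ : IsTorpedoFunction q b η₂)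
    (hδ₁b : η₁ b = δ₁) (hδ₂b : η₂ b = δ₂)
    (t : ℝ) (ht : t ∈ Set.Icc (0 : ℝ) 1) :
    IsTorpedoFunction q b (fun r => t * η₁ r + (1 - t) * η₂ r) ∧
    (fun r => t * η₁ r + (1 - t) * η₂ r) b = t * δ₁ + (1 - t) * δ₂ := by
  -- dispose of the degenerate cases t = 0 and t = 1
  rcases eq_or_lt_of_le ht.1 with h0 | h0
  · have he : (fun r => t * η₁ r + (1 - t) * η₂ r) = η₂ := by
      funext r; rw [← h0]; ring
    rw [he, ← h0, hδ₂b]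
    exact ⟨hη₂, by ring⟩
  rcases eq_or_lt_of_le ht.2 with h1 | h1
  · have he : (fun r => t * η₁ r + (1 - t) * η₂ r) = η₁ := by
      funext r; rw [h1]; ring
    rw [he, h1, hδ₁b]
    exact ⟨hη₁, by ring⟩
  -- main case: 0 < t < 1
  obtain ⟨hs1, h01, hd01, hev1, hpos1, hbd1, hconc1, ⟨ε₁, hε₁, hneg1⟩, hR1⟩ := hη₁
  obtain ⟨hs2, h02, hd02, hev2, hpos2, hbd2, hconc2, ⟨ε₂, hε₂, hneg2⟩, hR2⟩ := hη₂
  have ht1' : 0 < 1 - t := by linarith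
  have keyn : ∀ n : ℕ, iteratedDeriv n (fun r => t * η₁ r + (1 - t) * η₂ r)
      = fun r => t * iteratedDeriv n η₁ r + (1 - t) * iteratedDeriv n η₂ r :=
    iteratedDeriv_lin_comb t (1 - t) hs1 hs2
  have h2iter : ∀ f : ℝ → ℝ, iteratedDeriv 2 f = deriv (deriv f) := fun f => by
    rw [show (2 : ℕ) = 1 + 1 from rfl, iteratedDeriv_succ, iteratedDeriv_one]
  have hc' : deriv (fun r => t * η₁ r + (1 - t) * η₂ r)
      = fun r => t * deriv η₁ r + (1 - t) * deriv η₂ r := by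
    rw [← iteratedDeriv_one, keyn 1]
    simp only [iteratedDeriv_one]
  have hc'' : deriv (deriv (fun r => t * η₁ r + (1 - t) * η₂ r))
      = fun r => t * deriv (deriv η₁) r + (1 - t) * deriv (deriv η₂) r := by
    rw [← h2iter, keyn 2]
    simp only [h2iter]
  have hdb1 : deriv η₁ b = 0 := by rw [← iteratedDeriv_one]; exact hbd1 1 le_rfl
  have hdb2 : deriv η₂ b = 0 := by rw [← iteratedDeriv_one]; exact hbd2 1 le_rfl
  have hub1 := torpedo_deriv_bounds b hb η₁ hs1 hd01 hdb1 hconc1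
  have hub2 := torpedo_deriv_bounds b hb η₂ hs2 hd02 hdb2 hconc2
  have hcpos : ∀ r ∈ Set.Ioc (0 : ℝ) b, 0 < t * η₁ r + (1 - t) * η₂ r := fun r hr =>
    add_pos (mul_pos h0 (hpos1 r hr)) (mul_pos ht1' (hpos2 r hr))
  refine ⟨⟨?_, ?_, ?_, ?_, ?_, ?_, ?_, ?_, ?_⟩, ?_⟩
  · exact (contDiff_const.mul hs1).add (contDiff_const.mul hs2)
  · simp [h01, h02]
  · rw [hc']; simp [hd01, hd02]
  · intro k hk
    rw [keyn (2 * k)]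
    simp [hev1 k hk, hev2 k hk]
  · exact hcpos
  · intro k hk
    rw [keyn k]
    simp [hbd1 k hk, hbd2 k hk]
  · intro r hr
    rw [hc'']
    show t * deriv (deriv η₁) r + (1 - t) * deriv (deriv η₂) r ≤ 0
    have := hconc1 r hr
    have := hconc2 r hr
    nlinarith
  · refine ⟨min ε₁ ε₂, ⟨lt_min hε₁.1 hε₂.1, (min_le_left _ _).trans_lt hε₁.2⟩, ?_⟩
    intro r hr
    rw [hc'']
    show t * deriv (deriv η₁) r + (1 - t) * deriv (deriv η₂) r < 0
    have h1 := hneg1 r ⟨hr.1, hr.2.trans_le (min_le_left _ _)⟩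
    have h2 := hneg2 r ⟨hr.1, hr.2.trans_le (min_le_right _ _)⟩
    have := mul_neg_of_pos_of_neg h0 h1
    have := mul_neg_of_pos_of_neg ht1' h2
    linarith
  · intro r hr
    have hrIcc : r ∈ Set.Icc (0 : ℝ) b := ⟨hr.1.le, hr.2⟩
    have hv₁ := hpos1 r hr
    have hv₂ := hpos2 r hr
    have hv : (0 : ℝ) < t * η₁ r + (1 - t) * η₂ r := hcpos r hr
    rw [hc'']
    simp only [hc']
    set w₁ := deriv (deriv η₁) r
    set w₂ := deriv (deriv η₂) r
    set u₁ := deriv η₁ r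
    set u₂ := deriv η₂ r
    set v₁ := η₁ r
    set v₂ := η₂ r
    have hqR : (2 : ℝ) ≤ (q : ℝ) := by exact_mod_cast hq
    have hnum₁ : 0 < -2 * (q : ℝ) * w₁ * v₁ + (q : ℝ) * ((q : ℝ) - 1) * (1 - u₁ ^ 2) := by
      have h := hR1 r hr
      have heq : (-2 * (q : ℝ) * w₁ / v₁ + (q : ℝ) * ((q : ℝ) - 1) * (1 - u₁ ^ 2) / v₁ ^ 2)
          * v₁ ^ 2 = -2 * (q : ℝ) * w₁ * v₁ + (q : ℝ) * ((q : ℝ) - 1) * (1 - u₁ ^ 2) := by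
        field_simp
      rw [← heq]
      exact mul_pos h (by positivity)
    have hnum₂ : 0 < -2 * (q : ℝ) * w₂ * v₂ + (q : ℝ) * ((q : ℝ) - 1) * (1 - u₂ ^ 2) := by
      have h := hR2 r hr
      have heq : (-2 * (q : ℝ) * w₂ / v₂ + (q : ℝ) * ((q : ℝ) - 1) * (1 - u₂ ^ 2) / v₂ ^ 2)
          * v₂ ^ 2 = -2 * (q : ℝ) * w₂ * v₂ + (q : ℝ) * ((q : ℝ) - 1) * (1 - u₂ ^ 2) := by
        field_simp
      rw [← heq]
      exact mul_pos h (by positivity)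
    have hkey := torpedo_key_ineq (q : ℝ) t w₁ w₂ u₁ u₂ v₁ v₂ hqR h0 h1
      (hconc1 r hrIcc) (hconc2 r hrIcc)
      (hub1 r hrIcc).1 (hub1 r hrIcc).2 (hub2 r hrIcc).1 (hub2 r hrIcc).2
      hv₁ hv₂ hnum₁ hnum₂
    have heq : -2 * (q : ℝ) * (t * w₁ + (1 - t) * w₂) / (t * v₁ + (1 - t) * v₂)
        + (q : ℝ) * ((q : ℝ) - 1) * (1 - (t * u₁ + (1 - t) * u₂) ^ 2)
          / (t * v₁ + (1 - t) * v₂) ^ 2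
        = (-2 * (q : ℝ) * (t * w₁ + (1 - t) * w₂) * (t * v₁ + (1 - t) * v₂)
            + (q : ℝ) * ((q : ℝ) - 1) * (1 - (t * u₁ + (1 - t) * u₂) ^ 2))
          / (t * v₁ + (1 - t) * v₂) ^ 2 := by
      field_simp
    rw [heq]
    exact div_pos hkey (by positivity)
  · show t * η₁ b + (1 - t) * η₂ b = t * δ₁ + (1 - t) * δ₂
    rw [hδ₁b, hδ₂b]
end

section
/- Let n ≥ 3 be an integer, b > 0, and let β : ℝ → ℝ be a smooth function satisfying conditions (beta) on [0,b]. Then for every r ∈ (0,b), −2(n−1)·β''(r)/β(r) + (n−1)(n−2)·(1−β'(r)²)/β(r)² > 0. (This expression is the scalar curvature of the rotationally symmetric warped-product metric dr² + β(r)²ds²_{n−1}, so this metric on the sphere S^n has positive scalar curvature.) -/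
/-- Conditions (beta) for a smooth function `β : ℝ → ℝ` on `[0,b]`:
`β(0) = 0`, `β(b) = 0`, `β'(0) = 1`, `β'(b) = -1`, all even-order derivatives of
order `≥ 2` vanish at `0` and at `b`, `β'' ≤ 0` on `[0,b]`, `β'''(0) < 0`,
`β'''(b) > 0`, `β'' < 0` near (but not at) `0` and `b`, and `β > 0` on `(0,b)`. -/
def BetaConditions (b : ℝ) (β : ℝ → ℝ) : Prop :=
  ContDiff ℝ (⊤ : ℕ∞) β ∧
  β 0 = 0 ∧ β b = 0 ∧
  deriv β 0 = 1 ∧ deriv β b = -1 ∧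
  (∀ k : ℕ, 1 ≤ k → iteratedDeriv (2 * k) β 0 = 0 ∧ iteratedDeriv (2 * k) β b = 0) ∧
  (∀ r ∈ Set.Icc (0 : ℝ) b, iteratedDeriv 2 β r ≤ 0) ∧
  iteratedDeriv 3 β 0 < 0 ∧
  0 < iteratedDeriv 3 β b ∧
  (∃ ε > (0 : ℝ), (∀ r ∈ Set.Ioo (0 : ℝ) ε, iteratedDeriv 2 β r < 0) ∧
    (∀ r ∈ Set.Ioo (b - ε) b, iteratedDeriv 2 β r < 0)) ∧
  (∀ r ∈ Set.Ioo (0 : ℝ) b, 0 < β r)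

/-- For `n ≥ 3` and `β` satisfying conditions (beta) on `[0,b]`, the scalar curvature
`-2(n-1)β''(r)/β(r) + (n-1)(n-2)(1-β'(r)²)/β(r)²` of the rotationally symmetric
warped product metric `dr² + β(r)² ds²_{n-1}` on `Sⁿ` is positive on `(0,b)`. -/
theorem psc_of_betaConditions (n : ℕ) (hn : 3 ≤ n) (b : ℝ) (hb : 0 < b)
    (β : ℝ → ℝ) (hβ : BetaConditions b β) :
    ∀ r ∈ Set.Ioo (0 : ℝ) b,
      0 < -2 * ((n : ℝ) - 1) * deriv (deriv β) r / β r
          + ((n : ℝ) - 1) * ((n : ℝ) - 2) * (1 - (deriv β r) ^ 2) / (β r) ^ 2 := by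
  obtain ⟨hsm, h0, hbb, hd0, hdb, _, hcc, _, _, ⟨ε, hε, hnear0, hnearb⟩, hpos⟩ := hβ
  intro r hr
  obtain ⟨hr0, hrb⟩ := hr
  have h2 : iteratedDeriv 2 β = deriv (deriv β) := by
    rw [show (2:ℕ) = 1 + 1 from rfl, iteratedDeriv_succ, iteratedDeriv_one]
  have hsm' : ContDiff ℝ (⊤ : ℕ∞) (deriv β) := (contDiff_infty_iff_deriv.mp hsm).2
  have hcont : Continuous (deriv β) := hsm'.continuous
  have hdiff : Differentiable ℝ (deriv β) := hsm'.differentiable (by simp)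
  have hβr : 0 < β r := hpos r ⟨hr0, hrb⟩
  -- antitone on [0,b]
  have hanti : AntitoneOn (deriv β) (Set.Icc 0 b) := by
    apply antitoneOn_of_deriv_nonpos (convex_Icc 0 b) hcont.continuousOn
      (fun x _ => (hdiff x).differentiableWithinAt)
    intro x hx
    rw [interior_Icc] at hx
    have := hcc x ⟨le_of_lt hx.1, le_of_lt hx.2⟩
    rwa [h2] at this
  -- strict decrease near 0
  set m := min (ε/2) (r/2) with hm
  have hm0 : 0 < m := lt_min (by linarith) (by linarith)
  have hmε : m < ε := lt_of_le_of_lt (min_le_left _ _) (by linarith)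
  have hmr : m < r := lt_of_le_of_lt (min_le_right _ _) (by linarith)
  have hs1 : StrictAntiOn (deriv β) (Set.Icc 0 m) := by
    apply strictAntiOn_of_deriv_neg (convex_Icc 0 m) hcont.continuousOn
    intro x hx
    rw [interior_Icc] at hx
    have := hnear0 x ⟨hx.1, lt_trans hx.2 hmε⟩
    rwa [h2] at this
  have hlt1 : deriv β r < 1 := by
    have h1 : deriv β m < deriv β 0 := hs1 ⟨le_rfl, hm0.le⟩ ⟨hm0.le, le_rfl⟩ hm0
    have h2' : deriv β r ≤ deriv β m :=
      hanti ⟨hm0.le, by linarith⟩ ⟨hr0.le, hrb.le⟩ hmr.le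
    rw [hd0] at h1; linarith
  -- strict decrease near b
  set M := max (b - ε/2) ((r + b)/2) with hM
  have hMb : M < b := max_lt (by linarith) (by linarith)
  have hMε : b - ε < M := lt_of_lt_of_le (by linarith) (le_max_left _ _)
  have hrM : r < M := lt_of_lt_of_le (by linarith) (le_max_right _ _)
  have hs2 : StrictAntiOn (deriv β) (Set.Icc M b) := by
    apply strictAntiOn_of_deriv_neg (convex_Icc M b) hcont.continuousOn
    intro x hx
    rw [interior_Icc] at hx
    have := hnearb x ⟨lt_trans hMε hx.1, hx.2⟩
    rwa [h2] at this
  have hgt1 : -1 < deriv β r := by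
    have h1 : deriv β b < deriv β M := hs2 ⟨le_rfl, hMb.le⟩ ⟨hMb.le, le_rfl⟩ hMb
    have h2' : deriv β M ≤ deriv β r :=
      hanti ⟨hr0.le, hrb.le⟩ ⟨by linarith, hMb.le⟩ hrM.le
    rw [hdb] at h1; linarith
  have hsq : (deriv β r) ^ 2 < 1 := by
    have := abs_lt.mpr ⟨hgt1, hlt1⟩
    calc (deriv β r) ^ 2 = |deriv β r| ^ 2 := (sq_abs _).symm
    _ < 1 := by nlinarith [abs_nonneg (deriv β r)]
  have hdd : deriv (deriv β) r ≤ 0 := by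
    have := hcc r ⟨hr0.le, hrb.le⟩; rwa [h2] at this
  have hn1 : (1:ℝ) ≤ (n:ℝ) - 2 := by
    have : (3:ℝ) ≤ (n:ℝ) := by exact_mod_cast hn
    linarith
  have hterm1 : 0 ≤ -2 * ((n : ℝ) - 1) * deriv (deriv β) r / β r := by
    apply div_nonneg _ hβr.le
    nlinarith
  have hterm2 : 0 < ((n : ℝ) - 1) * ((n : ℝ) - 2) * (1 - (deriv β r) ^ 2) / (β r) ^ 2 := by
    apply div_pos _ (pow_pos hβr 2)
    have h3 : 0 < 1 - (deriv β r) ^ 2 := by linarith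
    exact mul_pos (mul_pos (by linarith : (0:ℝ) < (n:ℝ)-1) (by linarith)) h3
  linarith
end

section
/- Let E be Euclidean space ℝ^n, let c ∈ ℝ, and let α, β : ℝ → ℝ be differentiable at r ∈ ℝ with α'(r)² + β'(r)² = 1. Define G : ℝ × E × ℝ → ℝ × E × ℝ by G(t, x, l) = ((c + α(t))·cos l, β(t)·x, (c + α(t))·sin l). Then G is differentiable at any point (r, θ, l), and if ‖θ‖ = 1 and ⟨θ, w⟩ = 0, then for all s, m ∈ ℝ, writing (u₀, u, u₁) for the image of (s, w, m) under the derivative of G at (r, θ, l), one has u₀² + ‖u‖² + u₁² = s² + β(r)²·‖w‖² + (c + α(r))²·m². (That is, the composition bend∘cyl pulls back the Euclidean metric to the bent cylinder metric dr² + β(r)²·ds²_{n−1} + (c + α(r))²·dl².) -/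
/-- Let `α, β` be differentiable at `r` with `α'(r)² + β'(r)² = 1`, `c ∈ ℝ`, and
`G (t, x, l) = ((c + α t) cos l, β t • x, (c + α t) sin l)` (the composition
`bend ∘ cyl`).  Then `G` is differentiable at any `(r, θ, l)`, and if `‖θ‖ = 1` and
`⟨θ, w⟩ = 0` then the image `(u₀, u, u₁)` of a tangent vector `(s, w, m)` under the
derivative of `G` satisfies `u₀² + ‖u‖² + u₁² = s² + β(r)²‖w‖² + (c + α(r))²·m²`;
i.e. `bend ∘ cyl` pulls back the Euclidean metric to the bent cylinder metric
`dr² + β(r)² ds²_{n-1} + (c + α(r))² dl²`. -/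
theorem bend_cyl_pullback_metric (n : ℕ) (c : ℝ) (α β : ℝ → ℝ) (r : ℝ)
    (hα : DifferentiableAt ℝ α r) (hβ : DifferentiableAt ℝ β r)
    (hunit : (deriv α r) ^ 2 + (deriv β r) ^ 2 = 1)
    (θ : EuclideanSpace ℝ (Fin n)) (l : ℝ)
    (G : ℝ × EuclideanSpace ℝ (Fin n) × ℝ → ℝ × EuclideanSpace ℝ (Fin n) × ℝ)
    (hG : G = fun p => (((c + α p.1) * Real.cos p.2.2 : ℝ),
      (β p.1 • p.2.1 : EuclideanSpace ℝ (Fin n)), ((c + α p.1) * Real.sin p.2.2 : ℝ))) :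
    DifferentiableAt ℝ G (r, θ, l) ∧
    (‖θ‖ = 1 → ∀ w : EuclideanSpace ℝ (Fin n), (inner ℝ θ w : ℝ) = 0 → ∀ s m : ℝ,
      ((fderiv ℝ G (r, θ, l)) (s, w, m)).1 ^ 2
        + ‖((fderiv ℝ G (r, θ, l)) (s, w, m)).2.1‖ ^ 2
        + ((fderiv ℝ G (r, θ, l)) (s, w, m)).2.2 ^ 2
      = s ^ 2 + (β r) ^ 2 * ‖w‖ ^ 2 + (c + α r) ^ 2 * m ^ 2) := by
  have hfst : HasFDerivAt (fun p : ℝ × EuclideanSpace ℝ (Fin n) × ℝ => p.1)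
      (ContinuousLinearMap.fst ℝ ℝ (EuclideanSpace ℝ (Fin n) × ℝ)) (r, θ, l) := hasFDerivAt_fst
  have hsnd2 : HasFDerivAt (fun p : ℝ × EuclideanSpace ℝ (Fin n) × ℝ => p.2.2)
      ((ContinuousLinearMap.snd ℝ (EuclideanSpace ℝ (Fin n)) ℝ).comp
        (ContinuousLinearMap.snd ℝ ℝ (EuclideanSpace ℝ (Fin n) × ℝ))) (r, θ, l) :=
    hasFDerivAt_snd.comp _ hasFDerivAt_snd
  have hsnd1 : HasFDerivAt (fun p : ℝ × EuclideanSpace ℝ (Fin n) × ℝ => p.2.1)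
      ((ContinuousLinearMap.fst ℝ (EuclideanSpace ℝ (Fin n)) ℝ).comp
        (ContinuousLinearMap.snd ℝ ℝ (EuclideanSpace ℝ (Fin n) × ℝ))) (r, θ, l) :=
    hasFDerivAt_fst.comp _ hasFDerivAt_snd
  have hA : HasFDerivAt (fun p : ℝ × EuclideanSpace ℝ (Fin n) × ℝ => c + α p.1)
      ((fderiv ℝ α r).comp (ContinuousLinearMap.fst ℝ ℝ (EuclideanSpace ℝ (Fin n) × ℝ))) (r, θ, l) :=
    ((hα.hasFDerivAt).comp _ hfst).const_add c
  have hB : HasFDerivAt (fun p : ℝ × EuclideanSpace ℝ (Fin n) × ℝ => β p.1)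
      ((fderiv ℝ β r).comp (ContinuousLinearMap.fst ℝ ℝ (EuclideanSpace ℝ (Fin n) × ℝ))) (r, θ, l) :=
    (hβ.hasFDerivAt).comp _ hfst
  have hcos := (Real.hasDerivAt_cos l).comp_hasFDerivAt _ hsnd2
  have hsin := (Real.hasDerivAt_sin l).comp_hasFDerivAt _ hsnd2
  have hGder := (HasFDerivAt.prodMk (hA.mul hcos) (HasFDerivAt.prodMk (hB.smul hsnd1) (hA.mul hsin)))
  simp only [Function.comp_def, Pi.mul_apply, Pi.smul_apply'] at hGder
  rw [← hG] at hGder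
  refine ⟨hGder.differentiableAt, ?_⟩
  intro hθ w hw s m
  rw [hGder.fderiv]
  have hds : ∀ f : ℝ → ℝ, (fderiv ℝ f r) s = s * deriv f r := by
    intro f; rw [← toSpanSingleton_deriv]; simp
  simp only [ContinuousLinearMap.prod_apply, ContinuousLinearMap.add_apply,
    ContinuousLinearMap.smul_apply, ContinuousLinearMap.comp_apply,
    ContinuousLinearMap.coe_fst', ContinuousLinearMap.coe_snd',
    ContinuousLinearMap.smulRight_apply, hds]
  set a := deriv α r
  set b := deriv β r
  have hnorm : ‖(β r • w + (s * b) • θ : EuclideanSpace ℝ (Fin n))‖ ^ 2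
      = (β r)^2 * ‖w‖^2 + (s*b)^2 := by
    have hw' : (inner ℝ w θ : ℝ) = 0 := by rw [real_inner_comm]; exact hw
    rw [← real_inner_self_eq_norm_sq, inner_add_add_self]
    simp only [real_inner_smul_left, real_inner_smul_right, hw, hw',
      real_inner_self_eq_norm_sq, hθ]
    rw [norm_smul, norm_smul, hθ]
    simp only [Real.norm_eq_abs, mul_pow, sq_abs, mul_one, one_pow]
    ring
  rw [hnorm]
  have hcs := Real.sin_sq_add_cos_sq l
  simp only [smul_eq_mul]
  linear_combination ((c + α r) ^ 2 * m ^ 2 + s ^ 2 * a ^ 2) * hcs + s ^ 2 * hunit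
end

section
/- Let n ≥ 3 be an integer, b > 0, and let β : ℝ → ℝ be a smooth function satisfying conditions (beta) on [0,b]. Define α : ℝ → ℝ by α(r) = α₀ − ∫₀^r √(1 − β'(u)²) du, where α₀ = ∫₀^b √(1 − β'(u)²) du. Then there exists c₀ > 0 such that for every c ≥ c₀ and every r ∈ (0,b): (n−1)(n−2)·(1 − β'(r)²)/β(r)² − (2(n−1)/β(r))·(β''(r) + β'(r)·α'(r)/(c + α(r))) − 2·α''(r)/(c + α(r)) > 0. (This expression is the scalar curvature of the bent cylinder metric dr² + β(r)²·ds²_{n−1} + (c + α(r))²·dl², so for sufficiently large c the bent cylinder metric has positive scalar curvature.) -/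
private lemma bent_cylinder_psc_aux (N M sD sC D w B s p q : ℝ)
    (hN : 2 ≤ N) (hM : 1 ≤ M) (hw : 0 < w) (hB : 0 < B) (hq : q ≤ 0)
    (hp1 : -1 ≤ p) (hsD : 0 ≤ sD) (hsC : 0 ≤ sC)
    (hqw : -q ≤ sC * w) (hBw : B ≤ sD * w) (hBD : B^2 ≤ D * w^2)
    (hs : 2*N*sD + 2*sC*D + 1 ≤ s) (hspos : 0 < s) :
    0 < N*M*w^3*s - 2*N*q*B*(w*s) + 2*N*p*(w^2*B) - 2*p*q*B^2 := by
  have hw3 : 0 < w^3 := by positivity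
  have h2 : 0 ≤ (N * (-q)) * (B*(w*s)) :=
    mul_nonneg (mul_nonneg (by linarith) (by linarith))
      (mul_nonneg hB.le (mul_nonneg hw.le hspos.le))
  have h4 : (-q)*B^2 ≤ (sC*w)*(D*w^2) :=
    mul_le_mul hqw hBD (sq_nonneg _) (mul_nonneg hsC hw.le)
  have h5b2 : 0 ≤ ((-q)*(1+p))*B^2 :=
    mul_nonneg (mul_nonneg (by linarith) (by linarith)) (sq_nonneg _)
  have hNM : (1:ℝ) ≤ N*M := by nlinarith
  have h7 : 0 ≤ (N*M - 1) * (w^3*s) :=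
    mul_nonneg (by linarith) (mul_nonneg hw3.le hspos.le)
  have h8 : w^3*(2*N*sD + 2*sC*D + 1) ≤ w^3*s := mul_le_mul_of_nonneg_left hs hw3.le
  have h3 : w^2*B ≤ w^2*(sD*w) := mul_le_mul_of_nonneg_left hBw (sq_nonneg w)
  have h9 : N*(w^2*B) ≤ N*(w^2*(sD*w)) := mul_le_mul_of_nonneg_left h3 (by linarith)
  have h10 : 0 ≤ N*((1+p)*(w^2*B)) :=
    mul_nonneg (by linarith)
      (mul_nonneg (by linarith) (mul_nonneg (sq_nonneg w) hB.le))
  linarith [h2, h4, h5b2, h7, h8, h9, h10, hw3]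

set_option maxHeartbeats 4000000 in
/-- For `n ≥ 3`, `β` satisfying conditions (beta) on `[0,b]`, and
`α(r) = α₀ - ∫₀^r √(1 - β'(u)²) du` with `α₀ = ∫₀^b √(1 - β'(u)²) du`, there is a
`c₀ > 0` such that for all `c ≥ c₀` the scalar curvature of the bent cylinder metric
`dr² + β(r)² ds²_{n-1} + (c + α(r))² dl²`, namely
`(n-1)(n-2)(1-β'(r)²)/β(r)² - (2(n-1)/β(r))(β''(r) + β'(r)α'(r)/(c+α(r))) - 2α''(r)/(c+α(r))`,
is positive for all `r ∈ (0,b)`. -/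
theorem bent_cylinder_psc (n : ℕ) (hn : 3 ≤ n) (b : ℝ) (hb : 0 < b)
    (β : ℝ → ℝ) (hβ : BetaConditions b β)
    (α : ℝ → ℝ)
    (hα : α = fun r => (∫ u in (0 : ℝ)..b, Real.sqrt (1 - (deriv β u) ^ 2))
      - ∫ u in (0 : ℝ)..r, Real.sqrt (1 - (deriv β u) ^ 2)) :
    ∃ c₀ > (0 : ℝ), ∀ c ≥ c₀, ∀ r ∈ Set.Ioo (0 : ℝ) b,
      0 < ((n : ℝ) - 1) * ((n : ℝ) - 2) * (1 - (deriv β r) ^ 2) / (β r) ^ 2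
          - (2 * ((n : ℝ) - 1) / β r)
            * (deriv (deriv β) r + deriv β r * deriv α r / (c + α r))
          - 2 * deriv (deriv α) r / (c + α r) := by
  obtain ⟨hsm, hβ0, hβb, hd0, hdb, heven, hconc, h3a, h3b, ⟨ε, hεpos, hε1, hε2⟩, hpos⟩ := hβ
  have hi2 : iteratedDeriv 2 β = deriv (deriv β) := by
    simp [iteratedDeriv_succ, iteratedDeriv_zero]
  have hi3 : iteratedDeriv 3 β = deriv (deriv (deriv β)) := by
    simp [iteratedDeriv_succ, iteratedDeriv_zero]
  rw [hi2] at hconc hε1 hε2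
  rw [hi3] at h3a h3b
  have h20 : deriv (deriv β) 0 = 0 := by
    have := (heven 1 le_rfl).1; rwa [show 2 * 1 = 2 by norm_num, hi2] at this
  have h2b : deriv (deriv β) b = 0 := by
    have := (heven 1 le_rfl).2; rwa [show 2 * 1 = 2 by norm_num, hi2] at this
  -- smoothness
  have hsm1 : ContDiff ℝ (⊤:ℕ∞) (deriv β) := (contDiff_infty_iff_deriv.mp hsm).2
  have hsm2 : ContDiff ℝ (⊤:ℕ∞) (deriv (deriv β)) := (contDiff_infty_iff_deriv.mp hsm1).2
  have hsm3 : ContDiff ℝ (⊤:ℕ∞) (deriv (deriv (deriv β))) := (contDiff_infty_iff_deriv.mp hsm2).2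
  have hdβ : Differentiable ℝ β := (contDiff_infty_iff_deriv.mp hsm).1
  have hdβ' : Differentiable ℝ (deriv β) := (contDiff_infty_iff_deriv.mp hsm1).1
  have hdβ'' : Differentiable ℝ (deriv (deriv β)) := (contDiff_infty_iff_deriv.mp hsm2).1
  have cβ' : Continuous (deriv β) := hsm1.continuous
  have cβ'' : Continuous (deriv (deriv β)) := hsm2.continuous
  have cβ''' : Continuous (deriv (deriv (deriv β))) := hsm3.continuous
  -- β' is antitone on [0,b]
  have haβ' : AntitoneOn (deriv β) (Set.Icc 0 b) := by
    apply antitoneOn_of_deriv_nonpos (convex_Icc 0 b) cβ'.continuousOn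
      hdβ'.differentiableOn
    intro x hx
    rw [interior_Icc] at hx
    exact hconc x ⟨hx.1.le, hx.2.le⟩
  have hβ'le1 : ∀ r ∈ Set.Icc (0:ℝ) b, deriv β r ≤ 1 := by
    intro r hr
    have := haβ' (Set.left_mem_Icc.mpr hb.le) hr hr.1
    rwa [hd0] at this
  have hβ'ge : ∀ r ∈ Set.Icc (0:ℝ) b, -1 ≤ deriv β r := by
    intro r hr
    have := haβ' hr (Set.right_mem_Icc.mpr hb.le) hr.2
    rwa [hdb] at this
  -- strict bounds in the interior
  have hlt1 : ∀ r ∈ Set.Ioo (0:ℝ) b, deriv β r < 1 := by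
    intro r hr
    set t := min r (ε/2) with ht
    have htpos : 0 < t := lt_min hr.1 (by linarith)
    have htε : t ≤ ε/2 := min_le_right _ _
    have hstrict : StrictAntiOn (deriv β) (Set.Icc 0 ε) := by
      apply strictAntiOn_of_deriv_neg (convex_Icc 0 ε) cβ'.continuousOn
      intro x hx
      rw [interior_Icc] at hx
      exact hε1 x hx
    have h1 : deriv β t < deriv β 0 :=
      hstrict (Set.left_mem_Icc.mpr hεpos.le) ⟨htpos.le, by linarith⟩ htpos
    rw [hd0] at h1
    have h2 : deriv β r ≤ deriv β t := by
      rcases le_or_gt r t with h | h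
      · have : r = t := le_antisymm h (min_le_left _ _)
        rw [this]
      · exact haβ' ⟨htpos.le, le_trans (min_le_left _ _) hr.2.le⟩ ⟨hr.1.le, hr.2.le⟩ h.le
    linarith
  have hgtm1 : ∀ r ∈ Set.Ioo (0:ℝ) b, -1 < deriv β r := by
    intro r hr
    set t := max r (b - ε/2) with ht
    have htb : t < b := max_lt hr.2 (by linarith)
    have htε : b - ε ≤ t := le_trans (by linarith) (le_max_right _ _)
    have hstrict : StrictAntiOn (deriv β) (Set.Icc (b-ε) b) := by
      apply strictAntiOn_of_deriv_neg (convex_Icc _ _) cβ'.continuousOn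
      intro x hx
      rw [interior_Icc] at hx
      exact hε2 x hx
    have h1 : deriv β b < deriv β t :=
      hstrict ⟨htε, htb.le⟩ (Set.right_mem_Icc.mpr (by linarith)) htb
    rw [hdb] at h1
    have h2 : deriv β t ≤ deriv β r := by
      rcases le_or_gt t r with h | h
      · have : t = r := le_antisymm h (le_max_left _ _)
        rw [this]
      · exact haβ' ⟨hr.1.le, hr.2.le⟩ ⟨le_trans hr.1.le (le_max_left _ _), htb.le⟩ h.le
    linarith
  have hw2pos : ∀ r ∈ Set.Ioo (0:ℝ) b, 0 < 1 - (deriv β r)^2 := by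
    intro r hr
    have h1 := hlt1 r hr; have h2 := hgtm1 r hr
    linarith [mul_pos (by linarith : (0:ℝ) < 1 - deriv β r)
      (by linarith : (0:ℝ) < 1 + deriv β r)]
  -- the integrand
  set g : ℝ → ℝ := fun u => Real.sqrt (1 - (deriv β u)^2) with hg_def
  have hg : Continuous g := by
    apply Real.continuous_sqrt.comp
    exact continuous_const.sub (cβ'.pow 2)
  -- first derivative of α
  have hα' : deriv α = fun r => -(g r) := by
    funext r
    rw [hα]
    have h1 : HasDerivAt (fun u => ∫ x in (0:ℝ)..u, g x) (g r) r :=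
      (hg.integral_hasStrictDerivAt 0 r).hasDerivAt
    have h2 : HasDerivAt (fun u => (∫ x in (0:ℝ)..b, g x)
        - ∫ x in (0:ℝ)..u, g x) (0 - g r) r := (hasDerivAt_const r _).sub h1
    simpa using h2.deriv
  -- α is nonnegative on [0,b]
  have hαnn : ∀ r ∈ Set.Icc (0:ℝ) b, 0 ≤ α r := by
    intro r hr
    have hii1 : IntervalIntegrable g MeasureTheory.volume 0 r := hg.intervalIntegrable _ _
    have hii2 : IntervalIntegrable g MeasureTheory.volume r b := hg.intervalIntegrable _ _
    have hsplit := intervalIntegral.integral_add_adjacent_intervals hii1 hii2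
    have : α r = ∫ x in r..b, g x := by rw [hα]; simp only; rw [← hsplit]; ring
    rw [this]
    apply intervalIntegral.integral_nonneg hr.2
    intro u _; exact Real.sqrt_nonneg _
  -- second derivative of α
  have hα'' : ∀ r ∈ Set.Ioo (0:ℝ) b, deriv (deriv α) r
      = deriv β r * deriv (deriv β) r / Real.sqrt (1 - (deriv β r)^2) := by
    intro r hr
    have hwp := hw2pos r hr
    rw [hα']
    have h1 : HasDerivAt (fun x => 1 - (deriv β x)^2)
        (-(2 * deriv β r ^ 1 * deriv (deriv β) r)) r := by
      exact ((hasDerivAt_const r (1:ℝ)).sub (((hdβ' r).hasDerivAt).pow 2)).congr_deriv (by norm_num)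
    have h2 : HasDerivAt (fun x => g x)
        (1 / (2 * Real.sqrt (1 - (deriv β r)^2)) * (-(2 * deriv β r ^ 1 * deriv (deriv β) r))) r :=
      (Real.hasDerivAt_sqrt (ne_of_gt hwp)).comp r h1
    have h3 : deriv (fun r => -g r) r = _ := (h2.neg).deriv
    rw [h3]
    have hsq : Real.sqrt (1 - (deriv β r)^2) ≠ 0 :=
      ne_of_gt (Real.sqrt_pos.mpr hwp)
    field_simp
    -- bound on third derivative
  obtain ⟨K₀, hK₀⟩ := (isCompact_Icc (a := (0:ℝ)) (b := b)).exists_bound_of_continuousOn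
    cβ'''.continuousOn
  obtain ⟨K₂, hK₂⟩ := (isCompact_Icc (a := (0:ℝ)) (b := b)).exists_bound_of_continuousOn
    cβ''.continuousOn
  set K : ℝ := max K₀ 1 with hK_def
  have hK1 : (1:ℝ) ≤ K := le_max_right _ _
  have hKb : ∀ x ∈ Set.Icc (0:ℝ) b, |deriv (deriv (deriv β)) x| ≤ K :=
    fun x hx => le_trans (hK₀ x hx) (le_max_left _ _)
  set a0 : ℝ := -(deriv (deriv (deriv β)) 0) / 2 with ha0_def
  set ab : ℝ := (deriv (deriv (deriv β)) b) / 2 with hab_def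
  have ha0pos : 0 < a0 := by simp only [ha0_def]; linarith
  have habpos : 0 < ab := by simp only [hab_def]; linarith
  -- neighborhood of 0
  have hev0 : ∀ᶠ x in nhds (0:ℝ),
      deriv (deriv (deriv β)) x < -a0 ∧ 1/2 < deriv β x := by
    apply Filter.Eventually.and
    · exact (cβ'''.continuousAt (x := 0)).eventually_lt_const (by simp only [ha0_def]; linarith)
    · exact (cβ'.continuousAt (x := 0)).eventually_const_lt (by rw [hd0]; norm_num)
  rw [Metric.eventually_nhds_iff] at hev0
  obtain ⟨δ₀', hδ₀'pos, hδ₀'⟩ := hev0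
  -- neighborhood of b
  have hevb : ∀ᶠ x in nhds b,
      ab < deriv (deriv (deriv β)) x ∧ deriv β x < -(1/2) := by
    apply Filter.Eventually.and
    · exact (cβ'''.continuousAt (x := b)).eventually_const_lt (by simp only [hab_def]; linarith)
    · exact (cβ'.continuousAt (x := b)).eventually_lt_const (by rw [hdb]; norm_num)
  rw [Metric.eventually_nhds_iff] at hevb
  obtain ⟨δb', hδb'pos, hδb'⟩ := hevb
  set δ₀ : ℝ := min (δ₀'/2) (min (ε/2) (b/2)) with hδ₀_def
  set δb : ℝ := min (δb'/2) (min (ε/2) (b/2)) with hδb_def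
  have hδ₀pos : 0 < δ₀ := by
    apply lt_min (by linarith); exact lt_min (by linarith) (by linarith)
  have hδbpos : 0 < δb := by
    apply lt_min (by linarith); exact lt_min (by linarith) (by linarith)
  have hδ₀b2 : δ₀ ≤ b/2 := le_trans (min_le_right _ _) (min_le_right _ _)
  have hδbb2 : δb ≤ b/2 := le_trans (min_le_right _ _) (min_le_right _ _)
  have hmem0 : ∀ x ∈ Set.Icc (0:ℝ) δ₀,
      deriv (deriv (deriv β)) x < -a0 ∧ 1/2 < deriv β x := by
    intro x hx
    apply hδ₀'
    rw [Real.dist_eq, sub_zero, abs_of_nonneg hx.1]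
    calc x ≤ δ₀ := hx.2
      _ ≤ δ₀'/2 := min_le_left _ _
      _ < δ₀' := by linarith
  have hmemb : ∀ x ∈ Set.Icc (b - δb) b,
      ab < deriv (deriv (deriv β)) x ∧ deriv β x < -(1/2) := by
    intro x hx
    apply hδb'
    rw [Real.dist_eq, abs_of_nonpos (by linarith [hx.2])]
    have : b - δb ≤ x := hx.1
    calc -(x - b) = b - x := by ring
      _ ≤ δb := by linarith
      _ ≤ δb'/2 := min_le_left _ _
      _ < δb' := by linarith
  -- the comparison function ψ
  set C : ℝ := 2*K + 1 with hC_def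
  have hCpos : 0 < C := by simp only [hC_def]; linarith
  set ψ : ℝ → ℝ := fun x => C * (1 - (deriv β x)^2) - (deriv (deriv β) x)^2 with hψ_def
  have hψd : ∀ x, HasDerivAt ψ
      (-2 * deriv (deriv β) x * (C * deriv β x + deriv (deriv (deriv β)) x)) x := by
    intro x
    have h1 : HasDerivAt (fun y => C * (1 - (deriv β y)^2))
        (C * (0 - 2 * deriv β x ^ 1 * deriv (deriv β) x)) x :=
      (((hasDerivAt_const x (1:ℝ)).sub (((hdβ' x).hasDerivAt).pow 2))).const_mul C
    have h2 : HasDerivAt (fun y => (deriv (deriv β) y)^2)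
        (2 * deriv (deriv β) x ^ 1 * deriv (deriv (deriv β)) x) x :=
      ((hdβ'' x).hasDerivAt).pow 2
    have h3 := h1.sub h2
    refine h3.congr_deriv ?_
    ring
  have hψ0 : ψ 0 = 0 := by
    simp only [hψ_def, hd0, h20]; ring
  have hψb : ψ b = 0 := by
    simp only [hψ_def, hdb, h2b]; ring
  have hψdiff : Differentiable ℝ ψ := fun x => (hψd x).differentiableAt
  -- ψ ≥ 0 near 0
  have hψ0mono : MonotoneOn ψ (Set.Icc 0 δ₀) := by
    apply monotoneOn_of_deriv_nonneg (convex_Icc _ _) hψdiff.continuous.continuousOn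
      hψdiff.differentiableOn
    intro x hx
    rw [interior_Icc] at hx
    rw [(hψd x).deriv]
    have hxI : x ∈ Set.Icc (0:ℝ) δ₀ := ⟨hx.1.le, hx.2.le⟩
    have h1 := hmem0 x hxI
    have hq : deriv (deriv β) x ≤ 0 := hconc x ⟨hx.1.le, by linarith [hx.2, hδ₀b2, hb]⟩
    have h3 : -K ≤ deriv (deriv (deriv β)) x := by
      have := hKb x ⟨hx.1.le, by linarith [hx.2, hδ₀b2, hb]⟩
      exact neg_le_of_abs_le this
    have h4 : 0 ≤ C * deriv β x + deriv (deriv (deriv β)) x := by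
      have : C * (1/2) ≤ C * deriv β x := by
        apply mul_le_mul_of_nonneg_left h1.2.le hCpos.le
      simp only [hC_def] at this ⊢
      linarith
    linarith [mul_nonneg (by linarith : (0:ℝ) ≤ -(deriv (deriv β) x)) h4]
  have hψnear0 : ∀ x ∈ Set.Icc (0:ℝ) δ₀,
      (deriv (deriv β) x)^2 ≤ C * (1 - (deriv β x)^2) := by
    intro x hx
    have := hψ0mono (Set.left_mem_Icc.mpr hδ₀pos.le) hx hx.1
    rw [hψ0] at this
    simp only [hψ_def] at this
    linarith
  -- ψ ≥ 0 near b
  have hψbanti : AntitoneOn ψ (Set.Icc (b - δb) b) := by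
    apply antitoneOn_of_deriv_nonpos (convex_Icc _ _) hψdiff.continuous.continuousOn
      hψdiff.differentiableOn
    intro x hx
    rw [interior_Icc] at hx
    rw [(hψd x).deriv]
    have hxI : x ∈ Set.Icc (b - δb) b := ⟨hx.1.le, hx.2.le⟩
    have h1 := hmemb x hxI
    have hx0b : x ∈ Set.Icc (0:ℝ) b := ⟨by linarith [hx.1, hδbb2, hb], hx.2.le⟩
    have hq : deriv (deriv β) x ≤ 0 := hconc x hx0b
    have h3 : deriv (deriv (deriv β)) x ≤ K := by
      have := hKb x hx0b
      exact le_of_abs_le this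
    have h4 : C * deriv β x + deriv (deriv (deriv β)) x ≤ 0 := by
      have : C * deriv β x ≤ C * (-(1/2)) := by
        apply mul_le_mul_of_nonneg_left h1.2.le hCpos.le
      simp only [hC_def] at this ⊢
      linarith
    linarith [mul_nonneg (by linarith : (0:ℝ) ≤ -(deriv (deriv β) x))
      (by linarith : (0:ℝ) ≤ -(C * deriv β x + deriv (deriv (deriv β)) x))]
  have hψnearb : ∀ x ∈ Set.Icc (b - δb) b,
      (deriv (deriv β) x)^2 ≤ C * (1 - (deriv β x)^2) := by
    intro x hx
    have := hψbanti hx (Set.right_mem_Icc.mpr (by linarith [hδbb2])) hx.2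
    rw [hψb] at this
    simp only [hψ_def] at this
    linarith
    -- β'' ≤ -a0 x near 0
  have hq0 : ∀ x ∈ Set.Icc (0:ℝ) δ₀, deriv (deriv β) x ≤ -(a0 * x) := by
    have hφd : ∀ x, HasDerivAt (fun y => deriv (deriv β) y + a0 * y)
        (deriv (deriv (deriv β)) x + a0) x := by
      intro x
      exact (((hdβ'' x).hasDerivAt).add ((hasDerivAt_id x).const_mul a0)).congr_deriv (by ring)
    have hanti : AntitoneOn (fun y => deriv (deriv β) y + a0 * y) (Set.Icc 0 δ₀) := by
      apply antitoneOn_of_deriv_nonpos (convex_Icc _ _)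
        (fun x _ => ((hφd x).differentiableAt).continuousAt.continuousWithinAt)
        (fun x _ => ((hφd x).differentiableAt).differentiableWithinAt)
      intro x hx
      rw [interior_Icc] at hx
      rw [(hφd x).deriv]
      have := (hmem0 x ⟨hx.1.le, hx.2.le⟩).1
      linarith
    intro x hx
    have h := hanti (Set.left_mem_Icc.mpr hδ₀pos.le) hx hx.1
    simp only [h20, mul_zero, add_zero] at h
    linarith
  -- β'' ≤ -ab (b - x) near b
  have hqb : ∀ x ∈ Set.Icc (b - δb) b, deriv (deriv β) x ≤ -(ab * (b - x)) := by
    have hφd : ∀ x, HasDerivAt (fun y => deriv (deriv β) y - ab * y)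
        (deriv (deriv (deriv β)) x - ab) x := by
      intro x
      exact (((hdβ'' x).hasDerivAt).sub ((hasDerivAt_id x).const_mul ab)).congr_deriv (by ring)
    have hmono : MonotoneOn (fun y => deriv (deriv β) y - ab * y) (Set.Icc (b - δb) b) := by
      apply monotoneOn_of_deriv_nonneg (convex_Icc _ _)
        (fun x _ => ((hφd x).differentiableAt).continuousAt.continuousWithinAt)
        (fun x _ => ((hφd x).differentiableAt).differentiableWithinAt)
      intro x hx
      rw [interior_Icc] at hx
      rw [(hφd x).deriv]
      have := (hmemb x ⟨hx.1.le, hx.2.le⟩).1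
      linarith
    intro x hx
    have h := hmono hx (Set.right_mem_Icc.mpr (by linarith [hδbb2])) hx.2
    simp only [h2b] at h
    linarith
  -- β x ≤ x on [0,b]
  have hβlex : ∀ x ∈ Set.Icc (0:ℝ) b, β x ≤ x := by
    have hφd : ∀ x, HasDerivAt (fun y => y - β y) (1 - deriv β x) x := by
      intro x
      exact (hasDerivAt_id x).sub ((hdβ x).hasDerivAt)
    have hmono : MonotoneOn (fun y => y - β y) (Set.Icc 0 b) := by
      apply monotoneOn_of_deriv_nonneg (convex_Icc _ _)
        (fun x _ => ((hφd x).differentiableAt).continuousAt.continuousWithinAt)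
        (fun x _ => ((hφd x).differentiableAt).differentiableWithinAt)
      intro x hx
      rw [interior_Icc] at hx
      rw [(hφd x).deriv]
      have := hβ'le1 x ⟨hx.1.le, hx.2.le⟩
      linarith
    intro x hx
    have h := hmono (Set.left_mem_Icc.mpr hb.le) hx hx.1
    simp only [hβ0, sub_zero] at h
    linarith
  -- β x ≤ b - x on [0,b]
  have hβlebx : ∀ x ∈ Set.Icc (0:ℝ) b, β x ≤ b - x := by
    have hφd : ∀ x, HasDerivAt (fun y => (b - y) - β y) (-1 - deriv β x) x := by
      intro x
      exact (((hasDerivAt_const x b).sub (hasDerivAt_id x)).sub ((hdβ x).hasDerivAt)).congr_deriv (by ring)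
    have hanti : AntitoneOn (fun y => (b - y) - β y) (Set.Icc 0 b) := by
      apply antitoneOn_of_deriv_nonpos (convex_Icc _ _)
        (fun x _ => ((hφd x).differentiableAt).continuousAt.continuousWithinAt)
        (fun x _ => ((hφd x).differentiableAt).differentiableWithinAt)
      intro x hx
      rw [interior_Icc] at hx
      rw [(hφd x).deriv]
      have := hβ'ge x ⟨hx.1.le, hx.2.le⟩
      linarith
    intro x hx
    have h := hanti hx (Set.right_mem_Icc.mpr hb.le) hx.2
    simp only [hβb, sub_self, sub_zero] at h
    linarith
  -- minimum of 1 - β'^2 on the middle region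
  have hSne : (Set.Icc δ₀ (b - δb)).Nonempty := Set.nonempty_Icc.mpr (by linarith)
  obtain ⟨x₀, hx₀S, hx₀min⟩ := (isCompact_Icc (a := δ₀) (b := b - δb)).exists_isMinOn hSne
    ((continuous_const.sub (cβ'.pow 2)).continuousOn
      (f := fun x => 1 - (deriv β x)^2))
  set μ : ℝ := 1 - (deriv β x₀)^2 with hμ_def
  have hμpos : 0 < μ := hw2pos x₀ ⟨lt_of_lt_of_le hδ₀pos hx₀S.1,
    lt_of_le_of_lt hx₀S.2 (by linarith)⟩
  have hμle : ∀ x ∈ Set.Icc δ₀ (b - δb), μ ≤ 1 - (deriv β x)^2 := fun x hx => hx₀min hx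
  -- bound on second derivative
  set Kq : ℝ := max K₂ 0 with hKq_def
  have hKqnn : 0 ≤ Kq := le_max_right _ _
  have hKqb : ∀ x ∈ Set.Icc (0:ℝ) b, |deriv (deriv β) x| ≤ Kq :=
    fun x hx => le_trans (hK₂ x hx) (le_max_left _ _)
  -- global bound : q² ≤ Cq (1 - p²)
  set Cq : ℝ := max C (Kq^2/μ) with hCq_def
  have hCqpos : 0 < Cq := lt_of_lt_of_le hCpos (le_max_left _ _)
  have hq2 : ∀ r ∈ Set.Ioo (0:ℝ) b, (deriv (deriv β) r)^2 ≤ Cq * (1 - (deriv β r)^2) := by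
    intro r hr
    have hw2 : 0 < 1 - (deriv β r)^2 := hw2pos r hr
    rcases le_or_gt r δ₀ with h0 | h0
    · calc (deriv (deriv β) r)^2 ≤ C * (1 - (deriv β r)^2) := hψnear0 r ⟨hr.1.le, h0⟩
        _ ≤ Cq * (1 - (deriv β r)^2) :=
          mul_le_mul_of_nonneg_right (le_max_left _ _) hw2.le
    rcases le_or_gt (b - δb) r with hbr | hbr
    · calc (deriv (deriv β) r)^2 ≤ C * (1 - (deriv β r)^2) := hψnearb r ⟨hbr, hr.2.le⟩
        _ ≤ Cq * (1 - (deriv β r)^2) :=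
          mul_le_mul_of_nonneg_right (le_max_left _ _) hw2.le
    · have hrS : r ∈ Set.Icc δ₀ (b - δb) := ⟨h0.le, hbr.le⟩
      have h1 : |deriv (deriv β) r| ≤ Kq := hKqb r ⟨hr.1.le, hr.2.le⟩
      have h2 : (deriv (deriv β) r)^2 ≤ Kq^2 := by
        rw [← sq_abs]
        exact pow_le_pow_left₀ (abs_nonneg _) h1 2
      have h3 : Kq^2 ≤ (Kq^2/μ) * (1 - (deriv β r)^2) := by
        rw [div_mul_eq_mul_div, le_div_iff₀ hμpos]
        exact mul_le_mul_of_nonneg_left (hμle r hrS) (sq_nonneg _)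
      calc (deriv (deriv β) r)^2 ≤ (Kq^2/μ) * (1 - (deriv β r)^2) := le_trans h2 h3
        _ ≤ Cq * (1 - (deriv β r)^2) :=
          mul_le_mul_of_nonneg_right (le_max_right _ _) hw2.le
  -- global bound : β² ≤ D (1 - p²)
  set D : ℝ := max 1 (max (Cq/a0^2) (max (Cq/ab^2) (b^2/μ))) with hD_def
  have hD1 : (1:ℝ) ≤ D := le_max_left _ _
  have hB2 : ∀ r ∈ Set.Ioo (0:ℝ) b, (β r)^2 ≤ D * (1 - (deriv β r)^2) := by
    intro r hr
    have hw2 : 0 < 1 - (deriv β r)^2 := hw2pos r hr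
    have hβpos : 0 < β r := hpos r hr
    have hq2r := hq2 r hr
    rcases le_or_gt r δ₀ with h0 | h0
    · have h1 : a0 * β r ≤ -(deriv (deriv β) r) := by
        have ha := hq0 r ⟨hr.1.le, h0⟩
        have hβr := hβlex r ⟨hr.1.le, hr.2.le⟩
        have h2 := mul_le_mul_of_nonneg_left hβr ha0pos.le
        linarith
      have hkey : a0^2 * (β r)^2 ≤ Cq * (1 - (deriv β r)^2) := by
        have h2 := mul_self_le_mul_self (by positivity : (0:ℝ) ≤ a0 * β r) h1
        have h3 : (a0 * β r) * (a0 * β r) = a0^2 * (β r)^2 := by ring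
        have h4 : -deriv (deriv β) r * -deriv (deriv β) r = (deriv (deriv β) r)^2 := by ring
        rw [h3, h4] at h2
        linarith
      have h2 : (β r)^2 ≤ (Cq/a0^2) * (1 - (deriv β r)^2) := by
        rw [div_mul_eq_mul_div, le_div_iff₀ (by positivity)]
        linarith
      calc (β r)^2 ≤ (Cq/a0^2) * (1 - (deriv β r)^2) := h2
        _ ≤ D * (1 - (deriv β r)^2) := by
          apply mul_le_mul_of_nonneg_right _ hw2.le
          exact le_trans (le_max_left _ _) (le_max_right _ _)
    rcases le_or_gt (b - δb) r with hbr | hbr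
    · have h1 : ab * β r ≤ -(deriv (deriv β) r) := by
        have ha := hqb r ⟨hbr, hr.2.le⟩
        have hβr := hβlebx r ⟨hr.1.le, hr.2.le⟩
        have h2 := mul_le_mul_of_nonneg_left hβr habpos.le
        linarith
      have hkey : ab^2 * (β r)^2 ≤ Cq * (1 - (deriv β r)^2) := by
        have h2 := mul_self_le_mul_self (by positivity : (0:ℝ) ≤ ab * β r) h1
        have h3 : (ab * β r) * (ab * β r) = ab^2 * (β r)^2 := by ring
        have h4 : -deriv (deriv β) r * -deriv (deriv β) r = (deriv (deriv β) r)^2 := by ring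
        rw [h3, h4] at h2
        linarith
      have h2 : (β r)^2 ≤ (Cq/ab^2) * (1 - (deriv β r)^2) := by
        rw [div_mul_eq_mul_div, le_div_iff₀ (by positivity)]
        linarith
      calc (β r)^2 ≤ (Cq/ab^2) * (1 - (deriv β r)^2) := h2
        _ ≤ D * (1 - (deriv β r)^2) := by
          apply mul_le_mul_of_nonneg_right _ hw2.le
          exact le_trans (le_trans (le_max_left _ _) (le_max_right _ _)) (le_max_right _ _)
    · have hrS : r ∈ Set.Icc δ₀ (b - δb) := ⟨h0.le, hbr.le⟩
      have h1 : (β r)^2 ≤ b^2 := by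
        have h5 : β r ≤ b := le_trans (hβlex r ⟨hr.1.le, hr.2.le⟩) hr.2.le
        have h2 := mul_self_le_mul_self hβpos.le h5
        have h3 : β r * β r = (β r)^2 := by ring
        have h4 : b * b = b^2 := by ring
        rw [h3, h4] at h2
        exact h2
      have h3 : b^2 ≤ (b^2/μ) * (1 - (deriv β r)^2) := by
        rw [div_mul_eq_mul_div, le_div_iff₀ hμpos]
        exact mul_le_mul_of_nonneg_left (hμle r hrS) (sq_nonneg _)
      calc (β r)^2 ≤ (b^2/μ) * (1 - (deriv β r)^2) := le_trans h1 h3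
        _ ≤ D * (1 - (deriv β r)^2) := by
          apply mul_le_mul_of_nonneg_right _ hw2.le
          exact le_trans (le_trans (le_max_right _ _) (le_max_right _ _)) (le_max_right _ _)
    -- final constant
  set sD : ℝ := Real.sqrt D with hsD_def
  set sC : ℝ := Real.sqrt Cq with hsC_def
  have hDnn : (0:ℝ) ≤ D := by linarith
  have hsDnn : 0 ≤ sD := Real.sqrt_nonneg _
  have hsCnn : 0 ≤ sC := Real.sqrt_nonneg _
  have hn3 : (3:ℝ) ≤ (n:ℝ) := by exact_mod_cast hn
  have hn1 : (2:ℝ) ≤ (n:ℝ) - 1 := by linarith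
  have hn2 : (1:ℝ) ≤ (n:ℝ) - 2 := by linarith
  have he1 : 0 ≤ 2*((n:ℝ)-1)*sD := mul_nonneg (by linarith) hsDnn
  have he2 : 0 ≤ 2*sC*D := mul_nonneg (by linarith) (by linarith)
  refine ⟨2*((n:ℝ)-1)*sD + 2*sC*D + 1, by linarith, ?_⟩
  intro c hc r hr
  have hr0b : r ∈ Set.Icc (0:ℝ) b := ⟨hr.1.le, hr.2.le⟩
  have hq2r := hq2 r hr
  have hB2r := hB2 r hr
  have hw2p : 0 < 1 - (deriv β r)^2 := hw2pos r hr
  have hqr : deriv (deriv β) r ≤ 0 := hconc r hr0b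
  have hp1 : -1 ≤ deriv β r := hβ'ge r hr0b
  have hp2 : deriv β r ≤ 1 := hβ'le1 r hr0b
  have hBpos : 0 < β r := hpos r hr
  have hA : 0 ≤ α r := hαnn r hr0b
  have hddar := hα'' r hr
  have hdar : deriv α r = -Real.sqrt (1 - (deriv β r)^2) := by rw [hα']
  set w : ℝ := Real.sqrt (1 - (deriv β r)^2) with hw_def
  have hw : 0 < w := Real.sqrt_pos.mpr hw2p
  have hwsq : w^2 = 1 - (deriv β r)^2 := Real.sq_sqrt hw2p.le
  set s : ℝ := c + α r with hs_def
  have hs : 2*((n:ℝ)-1)*sD + 2*sC*D + 1 ≤ s := by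
    simp only [hs_def]; linarith
  have hspos : 0 < s := by linarith
  -- the key bounds
  have hBD : (β r)^2 ≤ D * w^2 := by rw [hwsq]; exact hB2r
  have hBw : β r ≤ sD * w := by
    have h1 : (β r)^2 ≤ (sD*w)^2 := by
      rw [mul_pow, hsD_def, Real.sq_sqrt hDnn, hwsq]; exact hB2r
    have h2 := Real.sqrt_le_sqrt h1
    rwa [Real.sqrt_sq hBpos.le, Real.sqrt_sq (mul_nonneg hsDnn hw.le)] at h2
  have hqw : -(deriv (deriv β) r) ≤ sC * w := by
    have h1 : (deriv (deriv β) r)^2 ≤ (sC*w)^2 := by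
      rw [mul_pow, hsC_def, Real.sq_sqrt hCqpos.le, hwsq]; exact hq2r
    have h2 := Real.sqrt_le_sqrt h1
    rw [Real.sqrt_sq_eq_abs, Real.sqrt_sq (mul_nonneg hsCnn hw.le)] at h2
    calc -(deriv (deriv β) r) ≤ |deriv (deriv β) r| := neg_le_abs _
      _ ≤ sC * w := h2
  -- rewrite the goal
  rw [hdar, hddar, ← hwsq]
  have hBne : β r ≠ 0 := ne_of_gt hBpos
  have hwne : w ≠ 0 := ne_of_gt hw
  have hsne : s ≠ 0 := ne_of_gt hspos
  have key : ((n:ℝ) - 1) * ((n:ℝ) - 2) * w^2 / (β r) ^ 2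
        - (2 * ((n:ℝ) - 1) / β r)
          * (deriv (deriv β) r + deriv β r * -w / s)
        - 2 * (deriv β r * deriv (deriv β) r / w) / s
      = (((n:ℝ)-1)*((n:ℝ)-2)*w^3*s
          - 2*((n:ℝ)-1)*(deriv (deriv β) r)*(β r)*(w*s)
          + 2*((n:ℝ)-1)*(deriv β r)*(w^2*(β r))
          - 2*(deriv β r)*(deriv (deriv β) r)*(β r)^2) / ((β r)^2*(w*s)) := by
    field_simp
    ring
  rw [key]
  apply div_pos _ (by positivity)
  exact bent_cylinder_psc_aux ((n:ℝ)-1) ((n:ℝ)-2) sD sC D w (β r) s (deriv β r)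
    (deriv (deriv β) r) hn1 hn2 hw hBpos hqr hp1 hsDnn hsCnn hqw hBw hBD hs hspos
end

section
/- Let q ≥ 2 be an integer and b, B > 0. Let ω : ℝ → ℝ be smooth with ω(r) > 0 for all r ∈ (0,b], ω'(r) ≥ 0 for all r ∈ [0,b], and −2q·ω''(r)/ω(r) + q(q−1)·(1 − ω'(r)²)/ω(r)² > 0 for all r ∈ (0,b]. Let c : ℝ → ℝ be smooth with c(0) = 0, c(t) ∈ (0,b] for all t ∈ (0,B], and 0 < c'(t) ≤ 1 and c''(t) ≤ 0 for all t ∈ [0,B]. Then for all t ∈ (0,B]: −2q·(ω∘c)''(t)/ω(c(t)) + q(q−1)·(1 − ((ω∘c)'(t))²)/ω(c(t))² > 0. (That is, the warped-product metric dt² + (ω∘c)(t)²·ds_q² obtained by reparameterising by the concave stretching function c still has positive scalar curvature.) -/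
/-- Reparameterising a positive-scalar-curvature warping function by a concave stretching
function preserves positive scalar curvature.  If `ω` is smooth with `ω > 0` on `(0,b]`,
`ω' ≥ 0` on `[0,b]` and `-2q ω''/ω + q(q-1)(1-ω'²)/ω² > 0` on `(0,b]`, and `c` is smooth
with `c(0) = 0`, `c(t) ∈ (0,b]` for `t ∈ (0,B]`, `0 < c' ≤ 1` and `c'' ≤ 0` on `[0,B]`,
then `-2q (ω∘c)''/(ω∘c) + q(q-1)(1-((ω∘c)')²)/(ω∘c)² > 0` on `(0,B]`; i.e. the warped
product metric `dt² + (ω∘c)(t)² ds_q²` still has positive scalar curvature. -/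
theorem stretched_warping_function_psc (q : ℕ) (hq : 2 ≤ q) (b B : ℝ)
    (hb : 0 < b) (hB : 0 < B)
    (ω : ℝ → ℝ) (hω : ContDiff ℝ (⊤ : ℕ∞) ω)
    (hωpos : ∀ r ∈ Set.Ioc (0 : ℝ) b, 0 < ω r)
    (hω' : ∀ r ∈ Set.Icc (0 : ℝ) b, 0 ≤ deriv ω r)
    (hωpsc : ∀ r ∈ Set.Ioc (0 : ℝ) b,
      0 < -2 * (q : ℝ) * deriv (deriv ω) r / ω r
          + (q : ℝ) * ((q : ℝ) - 1) * (1 - (deriv ω r) ^ 2) / (ω r) ^ 2)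
    (c : ℝ → ℝ) (hc : ContDiff ℝ (⊤ : ℕ∞) c) (hc0 : c 0 = 0)
    (hcmem : ∀ t ∈ Set.Ioc (0 : ℝ) B, c t ∈ Set.Ioc (0 : ℝ) b)
    (hc' : ∀ t ∈ Set.Icc (0 : ℝ) B, 0 < deriv c t ∧ deriv c t ≤ 1)
    (hc'' : ∀ t ∈ Set.Icc (0 : ℝ) B, deriv (deriv c) t ≤ 0) :
    ∀ t ∈ Set.Ioc (0 : ℝ) B,
      0 < -2 * (q : ℝ) * deriv (deriv (ω ∘ c)) t / ω (c t)
          + (q : ℝ) * ((q : ℝ) - 1) * (1 - (deriv (ω ∘ c) t) ^ 2) / (ω (c t)) ^ 2 := by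
  intro t ht
  have hω1 : Differentiable ℝ ω := hω.differentiable (by simp)
  have hωd : ContDiff ℝ (⊤ : ℕ∞) (deriv ω) := (contDiff_infty_iff_deriv.mp hω).2
  have hc1 : Differentiable ℝ c := hc.differentiable (by simp)
  have hcd : ContDiff ℝ (⊤ : ℕ∞) (deriv c) := (contDiff_infty_iff_deriv.mp hc).2
  have hcomp : deriv (ω ∘ c) = fun s => deriv ω (c s) * deriv c s := by
    funext s
    exact deriv_comp s (hω1 (c s)) (hc1 s)
  have hdωc : deriv (deriv (ω ∘ c)) t
      = (deriv (deriv ω) (c t) * deriv c t) * deriv c t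
        + deriv ω (c t) * deriv (deriv c) t := by
    rw [hcomp]
    rw [deriv_fun_mul (show DifferentiableAt ℝ (fun s => deriv ω (c s)) t from
      ((hωd.differentiable (by simp)).comp hc1) t)
      ((hcd.differentiable (by simp)) t)]
    congr 1
    rw [show (fun s => deriv ω (c s)) = deriv ω ∘ c from rfl,
      deriv_comp t ((hωd.differentiable (by simp)) (c t)) (hc1 t)]
  have htI : t ∈ Set.Icc (0 : ℝ) B := ⟨le_of_lt ht.1, ht.2⟩
  have hct := hcmem t ht
  have hctI : c t ∈ Set.Icc (0 : ℝ) b := ⟨le_of_lt hct.1, hct.2⟩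
  set a := ω (c t) with ha_def
  set u := deriv ω (c t) with hu_def
  set p := deriv c t with hp_def
  set k := deriv (deriv c) t with hk_def
  set w := deriv (deriv ω) (c t) with hw_def
  have ha : 0 < a := hωpos _ hct
  have hu : 0 ≤ u := hω' _ hctI
  have hp : 0 < p := (hc' t htI).1
  have hp1 : p ≤ 1 := (hc' t htI).2
  have hk : k ≤ 0 := hc'' t htI
  have hS := hωpsc _ hct
  have hq1 : (1 : ℝ) ≤ (q : ℝ) := by exact_mod_cast Nat.one_le_of_lt hq
  rw [hdωc, hcomp]
  have hane : a ≠ 0 := ne_of_gt ha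
  have hident : -2 * (q : ℝ) * ((w * p) * p + u * k) / a
      + (q : ℝ) * ((q : ℝ) - 1) * (1 - (u * p) ^ 2) / a ^ 2
      = p ^ 2 * (-2 * (q : ℝ) * w / a + (q : ℝ) * ((q : ℝ) - 1) * (1 - u ^ 2) / a ^ 2)
        + (-2 * (q : ℝ) * (u * k)) / a
        + (q : ℝ) * ((q : ℝ) - 1) * (1 - p ^ 2) / a ^ 2 := by
    field_simp
    ring
  rw [hident]
  have h1 : 0 < p ^ 2 * (-2 * (q : ℝ) * w / a
      + (q : ℝ) * ((q : ℝ) - 1) * (1 - u ^ 2) / a ^ 2) :=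
    mul_pos (by positivity) hS
  have h2 : 0 ≤ (-2 * (q : ℝ) * (u * k)) / a := by
    apply div_nonneg _ (le_of_lt ha)
    have : u * k ≤ 0 := mul_nonpos_of_nonneg_of_nonpos hu hk
    nlinarith [Nat.cast_nonneg (α := ℝ) q]
  have h3 : 0 ≤ (q : ℝ) * ((q : ℝ) - 1) * (1 - p ^ 2) / a ^ 2 := by
    apply div_nonneg _ (by positivity)
    have hp2 : p ^ 2 ≤ 1 := by nlinarith
    have := mul_nonneg (mul_nonneg (Nat.cast_nonneg (α := ℝ) q) (by linarith : (0:ℝ) ≤ (q:ℝ) - 1)) (by linarith : (0:ℝ) ≤ 1 - p ^ 2)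
    linarith
  linarith
end

section
/- Let b > 0 and let β : ℝ → ℝ be a smooth function satisfying conditions (beta) on [0,b]. Define α : ℝ → ℝ by α(r) = α₀ − ∫₀^r √(1 − β'(u)²) du, where α₀ = ∫₀^b √(1 − β'(u)²) du. Then −1 < β'(r) < 1 for every r ∈ (0,b), and α is strictly decreasing on [0,b]. -/
/-- For `β` satisfying conditions (beta) on `[0,b]` and
`α(r) = α₀ - ∫₀^r √(1 - β'(u)²) du` with `α₀ = ∫₀^b √(1 - β'(u)²) du`, one has
`-1 < β'(r) < 1` for every `r ∈ (0,b)`, and `α` is strictly decreasing on `[0,b]`. -/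
theorem alpha_strictAnti (b : ℝ) (hb : 0 < b) (β : ℝ → ℝ) (hβ : BetaConditions b β)
    (α : ℝ → ℝ)
    (hα : α = fun r => (∫ u in (0 : ℝ)..b, Real.sqrt (1 - (deriv β u) ^ 2))
      - ∫ u in (0 : ℝ)..r, Real.sqrt (1 - (deriv β u) ^ 2)) :
    (∀ r ∈ Set.Ioo (0 : ℝ) b, -1 < deriv β r ∧ deriv β r < 1) ∧
    StrictAntiOn α (Set.Icc (0 : ℝ) b) := by
  obtain ⟨hsm, h0, hb0, hd0, hdb, -, hconc, -, -, ⟨ε, hε, hε1, hε2⟩, -⟩ := hβ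
  -- deriv β is smooth, hence differentiable and continuous
  have hsm' : ContDiff ℝ (⊤ : ℕ∞) (deriv β) := (contDiff_infty_iff_deriv.mp hsm).2
  have hd' : Differentiable ℝ (deriv β) := hsm'.differentiable (by simp)
  have hc' : Continuous (deriv β) := hd'.continuous
  -- second derivative facts
  have h2 : ∀ r ∈ Set.Icc (0 : ℝ) b, deriv (deriv β) r ≤ 0 := by
    intro r hr
    have := hconc r hr
    rwa [iteratedDeriv_succ, iteratedDeriv_one] at this
  have h2a : ∀ r ∈ Set.Ioo (0 : ℝ) ε, deriv (deriv β) r < 0 := by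
    intro r hr
    have := hε1 r hr
    rwa [iteratedDeriv_succ, iteratedDeriv_one] at this
  have h2b : ∀ r ∈ Set.Ioo (b - ε) b, deriv (deriv β) r < 0 := by
    intro r hr
    have := hε2 r hr
    rwa [iteratedDeriv_succ, iteratedDeriv_one] at this
  -- antitone of deriv β on [0,b]
  have hanti : AntitoneOn (deriv β) (Set.Icc 0 b) := by
    apply antitoneOn_of_deriv_nonpos (convex_Icc 0 b) hc'.continuousOn
      (fun x _ => (hd' x).differentiableWithinAt)
    intro x hx
    exact h2 x (interior_subset hx)
  -- the pointwise bound
  have hbound : ∀ r ∈ Set.Ioo (0 : ℝ) b, -1 < deriv β r ∧ deriv β r < 1 := by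
    intro r hr
    constructor
    · -- lower bound: use max (b-ε) r
      set d := max (b - ε) r with hdd
      have hdb' : d < b := max_lt (by linarith) hr.2
      have hrd : r ≤ d := le_max_right _ _
      have hsa : StrictAntiOn (deriv β) (Set.Icc d b) := by
        apply strictAntiOn_of_deriv_neg (convex_Icc d b) (hc'.continuousOn)
        intro x hx
        rw [interior_Icc] at hx
        exact h2b x ⟨lt_of_le_of_lt (le_max_left _ _) hx.1, hx.2⟩
      have h1 : deriv β b < deriv β d :=
        hsa ⟨le_refl d, hdb'.le⟩ ⟨le_of_lt hdb', le_refl b⟩ hdb'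
      have h2' : deriv β d ≤ deriv β r :=
        hanti ⟨hr.1.le, hr.2.le⟩ ⟨le_trans hr.1.le hrd, hdb'.le⟩ hrd
      rw [hdb] at h1; linarith
    · -- upper bound: use min ε r
      set c := min ε r with hcc
      have hc0 : 0 < c := lt_min hε hr.1
      have hcr : c ≤ r := min_le_right _ _
      have hsa : StrictAntiOn (deriv β) (Set.Icc 0 c) := by
        apply strictAntiOn_of_deriv_neg (convex_Icc 0 c) (hc'.continuousOn)
        intro x hx
        rw [interior_Icc] at hx
        exact h2a x ⟨hx.1, lt_of_lt_of_le hx.2 (min_le_left _ _)⟩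
      have h1 : deriv β c < deriv β 0 :=
        hsa ⟨le_refl 0, hc0.le⟩ ⟨hc0.le, le_refl c⟩ hc0
      have h2' : deriv β r ≤ deriv β c :=
        hanti ⟨hc0.le, le_trans hcr hr.2.le⟩ ⟨hr.1.le, hr.2.le⟩ hcr
      rw [hd0] at h1; linarith
  refine ⟨hbound, ?_⟩
  -- the integrand
  set g : ℝ → ℝ := fun u => Real.sqrt (1 - (deriv β u) ^ 2) with hg
  have hgc : Continuous g := by
    exact Real.continuous_sqrt.comp (continuous_const.sub (hc'.pow 2))
  have hgpos : ∀ u ∈ Set.Ioo (0 : ℝ) b, 0 < g u := by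
    intro u hu
    obtain ⟨hl, hr'⟩ := hbound u hu
    apply Real.sqrt_pos.mpr
    nlinarith
  intro x hx y hy hxy
  rw [hα]
  simp only
  have hint : ∀ p q : ℝ, IntervalIntegrable g MeasureTheory.volume p q :=
    fun p q => hgc.intervalIntegrable p q
  have key : (0 : ℝ) < ∫ u in x..y, g u := by
    apply intervalIntegral.intervalIntegral_pos_of_pos_on (hint x y) _ hxy
    intro t ht
    exact hgpos t ⟨lt_of_le_of_lt hx.1 ht.1, lt_of_lt_of_le ht.2 hy.2⟩
  have hsplit : (∫ u in (0:ℝ)..y, g u) - ∫ u in (0:ℝ)..x, g u = ∫ u in x..y, g u :=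
    intervalIntegral.integral_interval_sub_left (hint 0 y) (hint 0 x)
  linarith [hsplit ▸ key]
end
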